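/- Every d-dimensional perfect prismatoid in ℝ^d is affinely equivalent to a 0/1-polytope, i.e., there exists an affine bijection T : ℝ^d → ℝ^d such that T(P) is the convex hull of a subset of {0,1}^d. -/

import Mathlib

open scoped RealInnerProductSpace

/-- A polytope is the convex hull of a finite set of points. -/
def IsPolytope {d : ℕ} (P : Set (EuclideanSpace ℝ (Fin d))) : Prop :=
  ∃ S : Finset (EuclideanSpace ℝ (Fin d)),
    P = convexHull ℝ (S : Set (EuclideanSpace ℝ (Fin d)))

/-- A facet of a `d`-dimensional polytope is a `(d-1)`-dimensional exposed face. -/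
def IsFacet {d : ℕ} (P F : Set (EuclideanSpace ℝ (Fin d))) : Prop :=
  IsExposed ℝ P F ∧ Module.finrank ℝ (vectorSpan ℝ F) = d - 1

/-- A `d`-dimensional polytope `P` in `ℝ^d` is a perfect prismatoid if for every facet `F`
there is a (nonempty exposed) face `F'` parallel to `F` (i.e. `lin F' ⊆ lin F`) such that
`P = conv (F ∪ F')`. -/
def IsPerfectPrismatoid {d : ℕ} (P : Set (EuclideanSpace ℝ (Fin d))) : Prop :=
  IsPolytope P ∧ affineSpan ℝ P = ⊤ ∧
  ∀ F : Set (EuclideanSpace ℝ (Fin d)), IsFacet P F →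
    ∃ F' : Set (EuclideanSpace ℝ (Fin d)), IsExposed ℝ P F' ∧ F'.Nonempty ∧
      vectorSpan ℝ F' ≤ vectorSpan ℝ F ∧ P = convexHull ℝ (F ∪ F')

namespace PPAux
open Module Set

variable {d : ℕ}

/-- The exposed face of `P` in direction `u`. -/
def face (P : Set (EuclideanSpace ℝ (Fin d))) (u : EuclideanSpace ℝ (Fin d)) :
    Set (EuclideanSpace ℝ (Fin d)) :=
  {x ∈ P | ∀ y ∈ P, ⟪u, y⟫ ≤ ⟪u, x⟫}

lemma face_subset {P : Set (EuclideanSpace ℝ (Fin d))} {u : EuclideanSpace ℝ (Fin d)} :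
    face P u ⊆ P := fun _ hx => hx.1

lemma face_isExposed (P : Set (EuclideanSpace ℝ (Fin d))) (u : EuclideanSpace ℝ (Fin d)) :
    IsExposed ℝ P (face P u) := by
  intro _
  refine ⟨innerSL ℝ u, ?_⟩
  ext x
  simp only [face, Set.mem_setOf_eq, innerSL_apply_apply]

lemma isLinearMap_inner_right (u : EuclideanSpace ℝ (Fin d)) :
    IsLinearMap ℝ (fun y : EuclideanSpace ℝ (Fin d) => ⟪u, y⟫) :=
  ⟨fun x y => inner_add_right u x y, fun c x => real_inner_smul_right u x c⟩

/-- convex hull bound by halfspace. -/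
lemma hull_le {s : Set (EuclideanSpace ℝ (Fin d))} {w : EuclideanSpace ℝ (Fin d)} {M : ℝ}
    (h : ∀ x ∈ s, ⟪w, x⟫ ≤ M) : ∀ y ∈ convexHull ℝ s, ⟪w, y⟫ ≤ M :=
  fun _ hy => convexHull_min h (convex_halfSpace_le (isLinearMap_inner_right w) M) hy

lemma hull_eq {s : Set (EuclideanSpace ℝ (Fin d))} {w : EuclideanSpace ℝ (Fin d)} {M : ℝ}
    (h : ∀ x ∈ s, ⟪w, x⟫ = M) : ∀ y ∈ convexHull ℝ s, ⟪w, y⟫ = M :=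
  fun _ hy => convexHull_min h (convex_hyperplane (isLinearMap_inner_right w) M) hy

lemma vectorSpan_le_orth {A : Set (EuclideanSpace ℝ (Fin d))} {m : EuclideanSpace ℝ (Fin d)}
    (h : ∀ x ∈ A, ∀ y ∈ A, ⟪m, x⟫ = ⟪m, y⟫) : vectorSpan ℝ A ≤ (ℝ ∙ m)ᗮ := by
  rw [vectorSpan_def, Submodule.span_le]
  rintro z ⟨x, hx, y, hy, rfl⟩
  rw [SetLike.mem_coe, Submodule.mem_orthogonal_singleton_iff_inner_right]
  show ⟪m, x -ᵥ y⟫ = 0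
  rw [vsub_eq_sub, inner_sub_right, h x hx y hy, sub_self]

lemma const_of_vectorSpan_le_orth {A : Set (EuclideanSpace ℝ (Fin d))}
    {m : EuclideanSpace ℝ (Fin d)} (h : vectorSpan ℝ A ≤ (ℝ ∙ m)ᗮ)
    {x y : EuclideanSpace ℝ (Fin d)} (hx : x ∈ A) (hy : y ∈ A) : ⟪m, x⟫ = ⟪m, y⟫ := by
  have hxy : x - y ∈ (ℝ ∙ m)ᗮ := h (vsub_mem_vectorSpan ℝ hx hy)
  rw [Submodule.mem_orthogonal_singleton_iff_inner_right, inner_sub_right] at hxy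
  linarith

lemma vectorSpan_face_le_orth (P : Set (EuclideanSpace ℝ (Fin d)))
    (u : EuclideanSpace ℝ (Fin d)) : vectorSpan ℝ (face P u) ≤ (ℝ ∙ u)ᗮ := by
  apply vectorSpan_le_orth
  intro x hx y hy
  exact le_antisymm (hy.2 x hx.1) (hx.2 y hy.1)

lemma finrank_orth_singleton {v : EuclideanSpace ℝ (Fin d)} (hv : v ≠ 0) :
    finrank ℝ ((ℝ ∙ v)ᗮ : Submodule ℝ (EuclideanSpace ℝ (Fin d))) = d - 1 := by
  have h1 : finrank ℝ (ℝ ∙ v : Submodule ℝ (EuclideanSpace ℝ (Fin d))) = 1 :=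
    finrank_span_singleton hv
  have h2 := Submodule.finrank_add_finrank_orthogonal (K := (ℝ ∙ v : Submodule ℝ (EuclideanSpace ℝ (Fin d))))
  rw [h1, finrank_euclideanSpace_fin] at h2
  omega

lemma finrank_face_le {P : Set (EuclideanSpace ℝ (Fin d))} {u : EuclideanSpace ℝ (Fin d)}
    (hu : u ≠ 0) : finrank ℝ (vectorSpan ℝ (face P u)) ≤ d - 1 := by
  have := Submodule.finrank_mono (vectorSpan_face_le_orth P u)
  rwa [finrank_orth_singleton hu] at this

lemma face_nonempty {P : Set (EuclideanSpace ℝ (Fin d))} {S : Finset (EuclideanSpace ℝ (Fin d))}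
    (hS : P = convexHull ℝ (S : Set (EuclideanSpace ℝ (Fin d)))) (hPne : P.Nonempty)
    (u : EuclideanSpace ℝ (Fin d)) : (face P u).Nonempty := by
  have hcomp : IsCompact P := hS ▸ S.finite_toSet.isCompact_convexHull (𝕜 := ℝ)
  have hcont : Continuous (fun y : EuclideanSpace ℝ (Fin d) => ⟪u, y⟫) :=
    Continuous.inner continuous_const continuous_id
  obtain ⟨x, hxP, hmax⟩ := hcomp.exists_isMaxOn hPne hcont.continuousOn
  exact ⟨x, hxP, fun y hy => hmax hy⟩


lemma step_core {P : Set (EuclideanSpace ℝ (Fin d))} {S : Finset (EuclideanSpace ℝ (Fin d))}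
    (hS : P = convexHull ℝ (S : Set (EuclideanSpace ℝ (Fin d))))
    {v u : EuclideanSpace ℝ (Fin d)} (huv : 0 < ⟪u, v⟫)
    {x₀ : EuclideanSpace ℝ (Fin d)} (hx₀ : x₀ ∈ face P u)
    {m : EuclideanSpace ℝ (Fin d)} (hmW : ∀ x ∈ face P u, ⟪m, x⟫ = ⟪m, x₀⟫)
    (hmv : ⟪m, v⟫ = 0) (hviol : ∃ s ∈ S, ⟪m, x₀⟫ < ⟪m, s⟫) :
    ∃ w : EuclideanSpace ℝ (Fin d), 0 < ⟪w, v⟫ ∧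
      finrank ℝ (vectorSpan ℝ (face P u)) < finrank ℝ (vectorSpan ℝ (face P w)) := by
  classical
  set M := ⟪u, x₀⟫ with hM
  set μ := ⟪m, x₀⟫ with hμ
  set V : Finset (EuclideanSpace ℝ (Fin d)) := S.filter (fun s => μ < ⟪m, s⟫) with hV
  obtain ⟨s₁, hs₁S, hs₁⟩ := hviol
  have hVne : V.Nonempty := ⟨s₁, Finset.mem_filter.2 ⟨hs₁S, hs₁⟩⟩
  have hsP : ∀ s ∈ S, s ∈ P := fun s hs => hS ▸ subset_convexHull ℝ _ hs
  have husM : ∀ y ∈ P, ⟪u, y⟫ ≤ M := fun y hy => hx₀.2 y hy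
  have hlt : ∀ s ∈ V, ⟪u, s⟫ < M ∧ μ < ⟪m, s⟫ := by
    intro s hs
    obtain ⟨hsS, hsm⟩ := Finset.mem_filter.1 hs
    refine ⟨lt_of_le_of_ne (husM s (hsP s hsS)) ?_, hsm⟩
    intro heq
    have hsface : s ∈ face P u := ⟨hsP s hsS, fun y hy => heq ▸ husM y hy⟩
    exact absurd (hmW s hsface) (ne_of_gt hsm)
  set tf : EuclideanSpace ℝ (Fin d) → ℝ := fun s => (M - ⟪u, s⟫) / (⟪m, s⟫ - μ) with htf
  obtain ⟨s₀, hs₀V, hs₀min⟩ := V.exists_min_image tf hVne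
  obtain ⟨hs₀u, hs₀m⟩ := hlt s₀ hs₀V
  have ht_pos : 0 < tf s₀ := div_pos (by linarith) (by linarith)
  set t : ℝ := tf s₀ with ht
  refine ⟨u + t • m, ?_, ?_⟩
  · rw [inner_add_left, real_inner_smul_left, hmv]
    linarith
  · set w := u + t • m with hw
    have hwval : ∀ x : EuclideanSpace ℝ (Fin d), ⟪w, x⟫ = ⟪u, x⟫ + t * ⟪m, x⟫ := by
      intro x; rw [hw, inner_add_left, real_inner_smul_left]
    have hwx : ∀ x ∈ face P u, ⟪w, x⟫ = M + t * μ := by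
      intro x hx
      have h1 : ⟪u, x⟫ = M := le_antisymm (husM x hx.1) (hx.2 x₀ hx₀.1)
      rw [hwval, h1, hmW x hx]
    have hbndS : ∀ s ∈ (S : Set (EuclideanSpace ℝ (Fin d))), ⟪w, s⟫ ≤ M + t * μ := by
      intro s hsS
      rw [hwval]
      by_cases hsV : s ∈ V
      · obtain ⟨h1, h2⟩ := hlt s hsV
        have h3 : t ≤ tf s := hs₀min s hsV
        have h4 : t * (⟪m, s⟫ - μ) ≤ M - ⟪u, s⟫ := by
          rw [← le_div_iff₀ (by linarith)]
          exact h3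
        nlinarith
      · have h2 : ⟪m, s⟫ ≤ μ := by
          by_contra hc
          exact hsV (Finset.mem_filter.2 ⟨hsS, lt_of_not_ge hc⟩)
        have h1 : ⟪u, s⟫ ≤ M := husM s (hsP s hsS)
        nlinarith
    have hbndP : ∀ y ∈ P, ⟪w, y⟫ ≤ M + t * μ := by
      rw [hS]; exact hull_le hbndS
    have hfsub : face P u ⊆ face P w := by
      intro x hx
      exact ⟨hx.1, fun y hy => (hbndP y hy).trans_eq (hwx x hx).symm⟩
    have hs₀face : s₀ ∈ face P w := by
      have hs₀S : s₀ ∈ S := (Finset.mem_filter.1 hs₀V).1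
      have hval : ⟪w, s₀⟫ = M + t * μ := by
        rw [hwval]
        have : t * (⟪m, s₀⟫ - μ) = M - ⟪u, s₀⟫ :=
          div_mul_cancel₀ _ (by linarith : ⟪m, s₀⟫ - μ ≠ 0)
        nlinarith
      exact ⟨hsP s₀ hs₀S, fun y hy => (hbndP y hy).trans_eq hval.symm⟩
    have hle : vectorSpan ℝ (face P u) ≤ vectorSpan ℝ (face P w) := vectorSpan_mono ℝ hfsub
    have hmem : s₀ -ᵥ x₀ ∈ vectorSpan ℝ (face P w) :=
      vsub_mem_vectorSpan ℝ hs₀face (hfsub hx₀)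
    have hnot : s₀ -ᵥ x₀ ∉ vectorSpan ℝ (face P u) := by
      intro hc
      have horth : vectorSpan ℝ (face P u) ≤ (ℝ ∙ m)ᗮ :=
        vectorSpan_le_orth (fun x hx y hy => by rw [hmW x hx, hmW y hy])
      have := horth hc
      rw [Submodule.mem_orthogonal_singleton_iff_inner_right] at this
      rw [show s₀ -ᵥ x₀ = s₀ - x₀ from rfl, inner_sub_right] at this
      have : ⟪m, s₀⟫ = μ := by rw [hμ]; linarith
      linarith
    exact Submodule.finrank_lt_finrank_of_lt
      (SetLike.lt_iff_le_and_exists.2 ⟨hle, ⟨s₀ -ᵥ x₀, hmem, hnot⟩⟩)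

lemma step {P : Set (EuclideanSpace ℝ (Fin d))} {S : Finset (EuclideanSpace ℝ (Fin d))}
    (hS : P = convexHull ℝ (S : Set (EuclideanSpace ℝ (Fin d))))
    (hspan : affineSpan ℝ P = ⊤)
    {v u : EuclideanSpace ℝ (Fin d)} (huv : 0 < ⟪u, v⟫)
    (hdim : finrank ℝ (vectorSpan ℝ (face P u)) < d - 1) :
    ∃ w : EuclideanSpace ℝ (Fin d), 0 < ⟪w, v⟫ ∧
      finrank ℝ (vectorSpan ℝ (face P u)) < finrank ℝ (vectorSpan ℝ (face P w)) := by
  classical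
  have hPne : P.Nonempty := AffineSubspace.nonempty_of_affineSpan_eq_top ℝ _ _ hspan
  obtain ⟨x₀, hx₀⟩ := face_nonempty hS hPne u
  set W := vectorSpan ℝ (face P u) with hWdef
  have hv : v ≠ 0 := by
    rintro rfl; rw [inner_zero_right] at huv; exact lt_irrefl 0 huv
  have h1 : finrank ℝ W + finrank ℝ Wᗮ = d := by
    have := Submodule.finrank_add_finrank_orthogonal (K := W)
    rwa [finrank_euclideanSpace_fin] at this
  have h3 : finrank ℝ ((ℝ ∙ v) : Submodule ℝ (EuclideanSpace ℝ (Fin d)))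
      + finrank ℝ ((ℝ ∙ v)ᗮ : Submodule ℝ (EuclideanSpace ℝ (Fin d))) = d := by
    have := Submodule.finrank_add_finrank_orthogonal
      (K := (ℝ ∙ v : Submodule ℝ (EuclideanSpace ℝ (Fin d))))
    rwa [finrank_euclideanSpace_fin] at this
  have h2 : finrank ℝ ((ℝ ∙ v) : Submodule ℝ (EuclideanSpace ℝ (Fin d))) = 1 :=
    finrank_span_singleton hv
  have h4 := Submodule.finrank_sup_add_finrank_inf_eq Wᗮ ((ℝ ∙ v)ᗮ)
  have h5 : finrank ℝ ((Wᗮ ⊔ (ℝ ∙ v)ᗮ) : Submodule ℝ (EuclideanSpace ℝ (Fin d))) ≤ d := by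
    have := Submodule.finrank_le (Wᗮ ⊔ (ℝ ∙ v)ᗮ : Submodule ℝ (EuclideanSpace ℝ (Fin d)))
    rwa [finrank_euclideanSpace_fin] at this
  have hpos : 0 < finrank ℝ ((Wᗮ ⊓ (ℝ ∙ v)ᗮ) : Submodule ℝ (EuclideanSpace ℝ (Fin d))) := by
    omega
  have hnebot : (Wᗮ ⊓ (ℝ ∙ v)ᗮ : Submodule ℝ (EuclideanSpace ℝ (Fin d))) ≠ ⊥ := by
    intro hc
    rw [hc, finrank_bot] at hpos
    exact lt_irrefl 0 hpos
  obtain ⟨m, hmmem, hm0⟩ := Submodule.exists_mem_ne_zero_of_ne_bot hnebot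
  have hmW : m ∈ Wᗮ := hmmem.1
  have hmv : ⟪m, v⟫ = 0 := Submodule.mem_orthogonal_singleton_iff_inner_left.1 hmmem.2
  have hconst : ∀ x ∈ face P u, ⟪m, x⟫ = ⟪m, x₀⟫ := by
    intro x hx
    have hmem : x -ᵥ x₀ ∈ W := vsub_mem_vectorSpan ℝ hx hx₀
    have := (Submodule.mem_orthogonal W m).1 hmW _ hmem
    rw [real_inner_comm] at this
    rw [show x -ᵥ x₀ = x - x₀ from rfl, inner_sub_right] at this
    linarith
  have hex : ∃ s ∈ S, ⟪m, s⟫ ≠ ⟪m, x₀⟫ := by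
    by_contra hc
    push_neg at hc
    have hle : vectorSpan ℝ (S : Set (EuclideanSpace ℝ (Fin d))) ≤ (ℝ ∙ m)ᗮ :=
      vectorSpan_le_orth (fun x hx y hy => by rw [hc x hx, hc y hy])
    have hvs : vectorSpan ℝ (S : Set (EuclideanSpace ℝ (Fin d))) = ⊤ := by
      have h6 : affineSpan ℝ (S : Set (EuclideanSpace ℝ (Fin d))) = ⊤ := by
        rw [← affineSpan_convexHull, ← hS, hspan]
      exact AffineSubspace.vectorSpan_eq_top_of_affineSpan_eq_top ℝ _ _ h6
    rw [hvs] at hle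
    have hmm : m ∈ (ℝ ∙ m)ᗮ := hle Submodule.mem_top
    rw [Submodule.mem_orthogonal_singleton_iff_inner_right, inner_self_eq_zero] at hmm
    exact hm0 hmm
  obtain ⟨s₁, hs₁S, hs₁⟩ := hex
  rcases hs₁.lt_or_gt with hlt | hgt
  · refine step_core hS huv hx₀ (m := -m) ?_ ?_ ⟨s₁, hs₁S, ?_⟩
    · intro x hx; rw [inner_neg_left, inner_neg_left, hconst x hx]
    · rw [inner_neg_left, hmv, neg_zero]
    · rw [inner_neg_left, inner_neg_left]; linarith
  · exact step_core hS huv hx₀ hconst hmv ⟨s₁, hs₁S, hgt⟩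

lemma exists_facet_dir {P : Set (EuclideanSpace ℝ (Fin d))}
    {S : Finset (EuclideanSpace ℝ (Fin d))}
    (hS : P = convexHull ℝ (S : Set (EuclideanSpace ℝ (Fin d))))
    (hspan : affineSpan ℝ P = ⊤) {v : EuclideanSpace ℝ (Fin d)} (hv : v ≠ 0) :
    ∃ w : EuclideanSpace ℝ (Fin d), 0 < ⟪w, v⟫ ∧
      finrank ℝ (vectorSpan ℝ (face P w)) = d - 1 := by
  have key : ∀ n : ℕ, ∀ u : EuclideanSpace ℝ (Fin d), 0 < ⟪u, v⟫ →
      d - 1 - finrank ℝ (vectorSpan ℝ (face P u)) ≤ n →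
      ∃ w : EuclideanSpace ℝ (Fin d), 0 < ⟪w, v⟫ ∧
        finrank ℝ (vectorSpan ℝ (face P w)) = d - 1 := by
    intro n
    induction n with
    | zero =>
      intro u huv hn
      have hu : u ≠ 0 := by
        rintro rfl; rw [inner_zero_left] at huv; exact lt_irrefl 0 huv
      have hle := finrank_face_le (P := P) hu
      exact ⟨u, huv, by omega⟩
    | succ n ih =>
      intro u huv hn
      have hu : u ≠ 0 := by
        rintro rfl; rw [inner_zero_left] at huv; exact lt_irrefl 0 huv
      have hle := finrank_face_le (P := P) hu
      by_cases heq : finrank ℝ (vectorSpan ℝ (face P u)) = d - 1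
      · exact ⟨u, huv, heq⟩
      · have hlt : finrank ℝ (vectorSpan ℝ (face P u)) < d - 1 := by omega
        obtain ⟨w, hwv, hw⟩ := step hS hspan huv hlt
        have hwne : w ≠ 0 := by
          rintro rfl; rw [inner_zero_left] at hwv; exact lt_irrefl 0 hwv
        have hwle := finrank_face_le (P := P) hwne
        exact ih w hwv (by omega)
  have hvv : 0 < ⟪v, v⟫ := by
    have h0 : ⟪v, v⟫ ≠ 0 := fun h => hv (inner_self_eq_zero.1 h)
    exact lt_of_le_of_ne real_inner_self_nonneg (Ne.symm h0)
  exact key (d - 1) v hvv (by omega)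

lemma exists_independent_facets {P : Set (EuclideanSpace ℝ (Fin d))}
    {S : Finset (EuclideanSpace ℝ (Fin d))}
    (hS : P = convexHull ℝ (S : Set (EuclideanSpace ℝ (Fin d))))
    (hspan : affineSpan ℝ P = ⊤) :
    ∃ u : Fin d → EuclideanSpace ℝ (Fin d), LinearIndependent ℝ u ∧
      ∀ i, finrank ℝ (vectorSpan ℝ (face P (u i))) = d - 1 := by
  have key : ∀ n : ℕ, n ≤ d → ∃ u : Fin n → EuclideanSpace ℝ (Fin d),
      LinearIndependent ℝ u ∧ ∀ i, finrank ℝ (vectorSpan ℝ (face P (u i))) = d - 1 := by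
    intro n
    induction n with
    | zero =>
      intro _
      exact ⟨fun i => i.elim0, linearIndependent_empty_type, fun i => i.elim0⟩
    | succ n ih =>
      intro hn
      obtain ⟨u, hLI, hfr⟩ := ih (by omega)
      have hspanu : Submodule.span ℝ (Set.range u) ≠ ⊤ := by
        intro hc
        have h1 : finrank ℝ (Submodule.span ℝ (Set.range u)) = n := by
          rw [finrank_span_eq_card hLI, Fintype.card_fin]
        rw [hc, finrank_top, finrank_euclideanSpace_fin] at h1
        omega
      have hnebot : ((Submodule.span ℝ (Set.range u))ᗮ
          : Submodule ℝ (EuclideanSpace ℝ (Fin d))) ≠ ⊥ := by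
        rw [ne_eq, Submodule.orthogonal_eq_bot_iff]
        exact hspanu
      obtain ⟨v, hvmem, hv0⟩ := Submodule.exists_mem_ne_zero_of_ne_bot hnebot
      obtain ⟨w, hwv, hwfr⟩ := exists_facet_dir hS hspan hv0
      refine ⟨Fin.snoc u w, ?_, ?_⟩
      · refine linearIndependent_fin_snoc.2 ⟨hLI, ?_⟩
        intro hc
        have : ⟪w, v⟫ = 0 := (Submodule.mem_orthogonal _ v).1 hvmem w hc
        rw [this] at hwv
        exact lt_irrefl 0 hwv
      · intro i
        refine Fin.lastCases ?_ ?_ i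
        · rw [Fin.snoc_last]; exact hwfr
        · intro j; rw [Fin.snoc_castSucc]; exact hfr j
  exact key d le_rfl

end PPAux


/-- **Theorem 1.** Every `d`-dimensional perfect prismatoid in `ℝ^d` is
affinely equivalent to a 0/1-polytope: there is an affine bijection `T` of `ℝ^d` such that
`T(P)` is the convex hull of a subset of the vertex set `{0,1}^d` of the unit cube. -/
theorem perfect_prismatoid_affine_equiv_01_polytope {d : ℕ}
    (P : Set (EuclideanSpace ℝ (Fin d))) (hP : IsPerfectPrismatoid P) :
    ∃ T : EuclideanSpace ℝ (Fin d) ≃ᵃ[ℝ] EuclideanSpace ℝ (Fin d),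
      ∃ S : Set (EuclideanSpace ℝ (Fin d)),
        S ⊆ {x | ∀ i, x i = 0 ∨ x i = 1} ∧ T '' P = convexHull ℝ S := by
  classical
  obtain ⟨⟨S, hS⟩, hspan, hfacet⟩ := hP
  obtain ⟨u, hLI, hfr⟩ := PPAux.exists_independent_facets hS hspan
  have hPne : P.Nonempty := AffineSubspace.nonempty_of_affineSpan_eq_top ℝ _ _ hspan
  have hu0 : ∀ i, u i ≠ 0 := fun i => hLI.ne_zero i
  have hfacets : ∀ i, IsFacet P (PPAux.face P (u i)) :=
    fun i => ⟨PPAux.face_isExposed P (u i), hfr i⟩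
  choose F' hexp' hne' hpar' hPeq' using fun i => hfacet _ (hfacets i)
  choose x₀ hx₀ using fun i => PPAux.face_nonempty hS hPne (u i)
  choose y₀ hy₀ using hne'
  set b : Fin d → ℝ := fun i => ⟪u i, x₀ i⟫ with hb
  set c : Fin d → ℝ := fun i => ⟪u i, y₀ i⟫ with hc
  have hFb : ∀ i, ∀ x ∈ PPAux.face P (u i), ⟪u i, x⟫ = b i := fun i x hx =>
    le_antisymm ((hx₀ i).2 x hx.1) (hx.2 _ (hx₀ i).1)
  have hvsF : ∀ i, vectorSpan ℝ (PPAux.face P (u i)) ≤ (ℝ ∙ u i)ᗮ :=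
    fun i => PPAux.vectorSpan_face_le_orth P (u i)
  have hF'c : ∀ i, ∀ y ∈ F' i, ⟪u i, y⟫ = c i := fun i y hy =>
    PPAux.const_of_vectorSpan_le_orth ((hpar' i).trans (hvsF i)) hy (hy₀ i)
  have hbc : ∀ i, c i - b i ≠ 0 := by
    intro i heq
    rw [sub_eq_zero] at heq
    have hall : ∀ z ∈ PPAux.face P (u i) ∪ F' i, ⟪u i, z⟫ = b i := by
      rintro z (hz | hz)
      · exact hFb i z hz
      · rw [hF'c i z hz, heq]
    have hallP : ∀ y ∈ P, ⟪u i, y⟫ = b i := by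
      rw [hPeq' i]
      exact PPAux.hull_eq hall
    have hle : vectorSpan ℝ P ≤ (ℝ ∙ u i)ᗮ :=
      PPAux.vectorSpan_le_orth (fun x hx y hy => by rw [hallP x hx, hallP y hy])
    rw [AffineSubspace.vectorSpan_eq_top_of_affineSpan_eq_top ℝ _ _ hspan] at hle
    have hmm : u i ∈ (ℝ ∙ u i)ᗮ := hle Submodule.mem_top
    rw [Submodule.mem_orthogonal_singleton_iff_inner_right, inner_self_eq_zero] at hmm
    exact hu0 i hmm
  have hspanu : Submodule.span ℝ (Set.range u) = ⊤ := by
    apply Submodule.eq_top_of_finrank_eq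
    rw [finrank_span_eq_card hLI, Fintype.card_fin, finrank_euclideanSpace_fin]
  set r : Fin d → ℝ := fun i => (c i - b i)⁻¹ with hr
  have hr0 : ∀ i, r i ≠ 0 := fun i => inv_ne_zero (hbc i)
  set Lpi : EuclideanSpace ℝ (Fin d) →ₗ[ℝ] (Fin d → ℝ) :=
    LinearMap.pi (fun i => r i • (innerSL ℝ (u i)).toLinearMap) with hLpi
  set L : EuclideanSpace ℝ (Fin d) →ₗ[ℝ] EuclideanSpace ℝ (Fin d) :=
    ((WithLp.linearEquiv 2 ℝ (Fin d → ℝ)).symm.toLinearMap).comp Lpi with hL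
  have hLapp : ∀ (x : EuclideanSpace ℝ (Fin d)) (i : Fin d), L x i = r i * ⟪u i, x⟫ := by
    intro x i
    rfl
  have hinj : Function.Injective L := by
    rw [← LinearMap.ker_eq_bot, Submodule.eq_bot_iff]
    intro x hx
    rw [LinearMap.mem_ker] at hx
    have hx' : ∀ i, ⟪u i, x⟫ = 0 := by
      intro i
      have h0 : L x i = 0 := by rw [hx]; rfl
      rw [hLapp] at h0
      rcases mul_eq_zero.1 h0 with h | h
      · exact absurd h (hr0 i)
      · exact h
    have hxo : x ∈ (Submodule.span ℝ (Set.range u))ᗮ := by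
      rw [Submodule.mem_orthogonal]
      intro z hz
      induction hz using Submodule.span_induction with
      | mem z hzr =>
        obtain ⟨i, rfl⟩ := hzr
        exact hx' i
      | zero => exact inner_zero_left x
      | add z w _ _ hz hw => rw [inner_add_left, hz, hw, add_zero]
      | smul a z _ hz => rw [real_inner_smul_left, hz, mul_zero]
    rw [hspanu, Submodule.top_orthogonal_eq_bot] at hxo
    exact hxo
  set Leq : EuclideanSpace ℝ (Fin d) ≃ₗ[ℝ] EuclideanSpace ℝ (Fin d) :=
    L.linearEquivOfInjective hinj rfl with hLeq
  set t₀ : EuclideanSpace ℝ (Fin d) :=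
    (WithLp.equiv 2 (Fin d → ℝ)).symm (fun i => -(b i * r i)) with ht₀
  set T : EuclideanSpace ℝ (Fin d) ≃ᵃ[ℝ] EuclideanSpace ℝ (Fin d) :=
    Leq.toAffineEquiv.trans (AffineEquiv.constVAdd ℝ (EuclideanSpace ℝ (Fin d)) t₀) with hT
  have hTapp : ∀ (x : EuclideanSpace ℝ (Fin d)) (i : Fin d),
      T x i = (⟪u i, x⟫ - b i) * r i := by
    intro x i
    have h1 : T x = t₀ +ᵥ Leq x := rfl
    have h2 : Leq x = L x := L.linearEquivOfInjective_apply hinj rfl x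
    have h3 : (t₀ +ᵥ Leq x) i = t₀ i + Leq x i := rfl
    rw [h1, h3, h2, hLapp]
    have h4 : t₀ i = -(b i * r i) := rfl
    rw [h4]
    ring
  have hconv : Convex ℝ P := hS ▸ convex_convexHull ℝ _
  have hcomp : IsCompact P := hS ▸ S.finite_toSet.isCompact_convexHull (𝕜 := ℝ)
  have hext_sub : P.extremePoints ℝ ⊆ (S : Set (EuclideanSpace ℝ (Fin d))) := by
    rw [hS]; exact extremePoints_convexHull_subset
  have hfin : (P.extremePoints ℝ).Finite := S.finite_toSet.subset hext_sub
  have hPE : P = convexHull ℝ (P.extremePoints ℝ) := by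
    have h1 := closure_convexHull_extremePoints hcomp hconv
    conv_lhs => rw [← h1, IsClosed.closure_eq (hfin.isClosed_convexHull (𝕜 := ℝ))]
  have hmem2 : ∀ i, ∀ e ∈ P.extremePoints ℝ, e ∈ PPAux.face P (u i) ∪ F' i := by
    intro i e he
    have h := extremePoints_convexHull_subset
      (A := PPAux.face P (u i) ∪ F' i) (𝕜 := ℝ)
    rw [← hPeq' i] at h
    exact h he
  refine ⟨T, ⇑T '' (P.extremePoints ℝ), ?_, ?_⟩
  · rintro x ⟨e, he, rfl⟩ i
    rcases hmem2 i e he with hF | hF'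
    · left; rw [hTapp e i, hFb i e hF, sub_self, zero_mul]
    · right; rw [hTapp e i, hF'c i e hF', hr]
      exact mul_inv_cancel₀ (hbc i)
  · conv_lhs => rw [hPE]
    exact T.toAffineMap.image_convexHull (P.extremePoints ℝ)
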